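/- (Corollary) For a feasible IP solution x° and feasible bases ℬ of the LP relaxation: inf{‖d − c‖_p : d ∈ IFR(LP, x°)} ≥ min_{B∈ℬ} inf{‖d − c‖_p : d ∈ IFR(G^B, x°)} ≥ inf{‖d − c‖_p : d ∈ IFR(IP, x°)}. -/

import Mathlib

namespace InverseGCR

variable {m n : ℕ}

/-- Feasibility for the IP `min{dᵀx : Ax = b, x ≥ 0, x ∈ ℤⁿ}`. -/
def IPfeas (A : Matrix (Fin m) (Fin n) ℤ) (b : Fin m → ℤ) (x : Fin n → ℤ) : Prop :=
  A.mulVec x = b ∧ ∀ i, 0 ≤ x i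

/-- Feasibility for the Gomory corner relaxation at basis `β` (nonnegativity dropped
on basic variables). -/
def Gfeas (A : Matrix (Fin m) (Fin n) ℤ) (b : Fin m → ℤ) (β : Fin m → Fin n)
    (x : Fin n → ℤ) : Prop :=
  A.mulVec x = b ∧ ∀ i ∉ Finset.image β Finset.univ, 0 ≤ x i

/-- Feasibility for the LP relaxation. -/
def LPfeas (A : Matrix (Fin m) (Fin n) ℤ) (b : Fin m → ℤ) (x : Fin n → ℝ) : Prop :=
  (A.map (Int.cast : ℤ → ℝ)).mulVec x = (fun i => (b i : ℝ)) ∧ ∀ i, 0 ≤ x i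

def obj (d : Fin n → ℝ) (x : Fin n → ℝ) : ℝ := ∑ i, d i * x i

def objZ (d : Fin n → ℝ) (x : Fin n → ℤ) : ℝ := ∑ i, d i * (x i : ℝ)

/-- The real basis matrix `A_B`. -/
def ABR (A : Matrix (Fin m) (Fin n) ℤ) (β : Fin m → Fin n) : Matrix (Fin m) (Fin m) ℝ :=
  (A.map (Int.cast : ℤ → ℝ)).submatrix id β

/-- `β` is a feasible basis of the LP relaxation: injective, nonsingular `A_B`,
and `A_B⁻¹ b ≥ 0`. -/
def FeasBasis (A : Matrix (Fin m) (Fin n) ℤ) (b : Fin m → ℤ) (β : Fin m → Fin n) : Prop :=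
  Function.Injective β ∧ IsUnit (ABR A β).det ∧
    ∀ i, 0 ≤ ((ABR A β)⁻¹.mulVec (fun i => (b i : ℝ))) i

/-- The reduced cost `d̄_j = d_j − d_Bᵀ A_B⁻¹ A_j` at basis `β` under objective `d`. -/
noncomputable def redCost (A : Matrix (Fin m) (Fin n) ℤ) (d : Fin n → ℝ) (β : Fin m → Fin n)
    (j : Fin n) : ℝ :=
  d j - dotProduct (Matrix.vecMul (fun i => d (β i)) (ABR A β)⁻¹)
    (fun i => (A i j : ℝ))

/-- Inverse-feasible region of the LP relaxation w.r.t. `x₀`. -/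
def IFR_LP (A : Matrix (Fin m) (Fin n) ℤ) (b : Fin m → ℤ) (x₀ : Fin n → ℤ) :
    Set (Fin n → ℝ) :=
  {d | ∀ x : Fin n → ℝ, LPfeas A b x → objZ d x₀ ≤ obj d x}

/-- Inverse-feasible region of the GCR at basis `β` w.r.t. `x₀`. -/
def IFR_G (A : Matrix (Fin m) (Fin n) ℤ) (b : Fin m → ℤ) (β : Fin m → Fin n)
    (x₀ : Fin n → ℤ) : Set (Fin n → ℝ) :=
  {d | ∀ x : Fin n → ℤ, Gfeas A b β x → objZ d x₀ ≤ objZ d x}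

/-- Inverse-feasible region of the IP w.r.t. `x₀`. -/
def IFR_IP (A : Matrix (Fin m) (Fin n) ℤ) (b : Fin m → ℤ) (x₀ : Fin n → ℤ) :
    Set (Fin n → ℝ) :=
  {d | ∀ x : Fin n → ℤ, IPfeas A b x → objZ d x₀ ≤ objZ d x}


/-- The optimal value of the inverse problem `min{‖d − c‖ : d ∈ S}` (as an `EReal`
infimum; `⊤` if `S` is empty). -/
noncomputable def invVal (S : Set (Fin n → ℝ)) (c : Fin n → ℝ) : EReal :=
  sInf ((fun d => ((‖d - c‖ : ℝ) : EReal)) '' S)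


/-! ### Auxiliary development -/

open Matrix Finset Submodule

noncomputable section Aux

variable {m n : ℕ}

/-- A basis: injective index map with invertible basis matrix. -/
def IsBasisP (A : Matrix (Fin m) (Fin n) ℤ) (β : Fin m → Fin n) : Prop :=
  Function.Injective β ∧ IsUnit (ABR A β).det

/-- Feasibility of a basis for an arbitrary real right-hand side. -/
def FeasFor (A : Matrix (Fin m) (Fin n) ℤ) (b' : Fin m → ℝ) (β : Fin m → Fin n) : Prop :=
  IsBasisP A β ∧ ∀ i, 0 ≤ ((ABR A β)⁻¹.mulVec b') i

lemma det_ne_zero_of_cols_indep {K : Type*} [Field K] (B : Matrix (Fin m) (Fin m) K)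
    (h : LinearIndependent K (fun j i => B i j)) : B.det ≠ 0 := by
  intro hdet
  obtain ⟨v, hv, hv0⟩ := (Matrix.exists_mulVec_eq_zero_iff).2 hdet
  apply hv
  have := Fintype.linearIndependent_iff.1 h v ?_
  · funext j; exact this j
  · funext i
    have h2 : (B.mulVec v) i = 0 := by rw [hv0]; rfl
    simpa [Matrix.mulVec, dotProduct, Finset.sum_apply, mul_comm] using h2

lemma exists_intdet (A : Matrix (Fin m) (Fin n) ℤ) (hrank : A.rank = m) :
    ∃ β : Fin m → Fin n, Function.Injective β ∧ (A.submatrix id β).det ≠ 0 := by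
  classical
  set Aq : Matrix (Fin m) (Fin n) ℚ := A.map (Int.cast : ℤ → ℚ) with hAq
  have hle : Aq.rank ≤ m := Aq.rank_le_card_height.trans (Fintype.card_fin m).le
  have hge : m ≤ Aq.rank := by
    set N := LinearMap.range A.mulVecLin with hN
    have hfin : Module.finrank ℤ N = m := hrank
    have hlt : Module.rank ℤ N < Cardinal.aleph0 := by
      exact Module.rank_lt_aleph0 ℤ N
    have hrk : Module.rank ℤ N = (m : Cardinal) := by
      rw [← Cardinal.cast_toNat_of_lt_aleph0 hlt]
      norm_cast
    obtain ⟨s, hscard, hsind⟩ := exists_set_linearIndependent_of_isDomain ℤ N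
    rw [hrk] at hscard
    have : Cardinal.mk s = Cardinal.mk (Fin m) := by rw [hscard, Cardinal.mk_fin]
    obtain ⟨e⟩ := Cardinal.eq.1 this.symm
    set cQ : (Fin m → ℤ) →ₗ[ℤ] (Fin m → ℚ) :=
      { toFun := fun v i => (v i : ℚ)
        map_add' := by intro a b; funext i; simp only [Pi.add_apply]; push_cast; ring
        map_smul' := by
          intro r a; funext i
          simp only [Pi.smul_apply, smul_eq_mul, RingHom.id_apply, zsmul_eq_mul]
          push_cast; ring } with hcQ
    have hcQinj : LinearMap.ker cQ = ⊥ := by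
      rw [LinearMap.ker_eq_bot]
      intro a b hab
      simp only [hcQ, LinearMap.coe_mk, AddHom.coe_mk] at hab
      funext i
      exact_mod_cast congrFun hab i
    have hsub : LinearMap.ker (N.subtype) = ⊥ := N.ker_subtype
    have hw : LinearIndependent ℤ (fun i : Fin m => (e i : N)) := hsind.comp e e.injective
    have hw' : LinearIndependent ℤ (fun i : Fin m => cQ (N.subtype (e i : N))) := by
      have := (hw.map' N.subtype hsub).map' cQ hcQinj
      exact this
    have hQ : LinearIndependent ℚ (fun i : Fin m => cQ (N.subtype (e i : N))) :=
      (LinearIndependent.iff_fractionRing ℤ ℚ).1 hw'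
    have hmem : ∀ i : Fin m, cQ (N.subtype (e i : N)) ∈ LinearMap.range Aq.mulVecLin := by
      intro i
      obtain ⟨x, hx⟩ := (e i : N).2
      refine ⟨fun j => (x j : ℚ), ?_⟩
      have hx' : A.mulVec x = ((e i : N) : Fin m → ℤ) := hx
      funext r
      simp only [mulVecLin_apply, Matrix.mulVec, dotProduct, hcQ, hAq,
        Matrix.map_apply, LinearMap.coe_mk, AddHom.coe_mk, Submodule.coe_subtype]
      rw [← hx']
      simp only [Matrix.mulVec, dotProduct]
      push_cast
      rfl
    set w'' : Fin m → ↥(LinearMap.range Aq.mulVecLin) :=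
      fun i => ⟨cQ (N.subtype (e i : N)), hmem i⟩ with hw''def
    have hQ'' : LinearIndependent ℚ w'' := by
      apply LinearIndependent.of_comp (LinearMap.range Aq.mulVecLin).subtype
      exact hQ
    calc m = Fintype.card (Fin m) := (Fintype.card_fin m).symm
    _ ≤ Module.finrank ℚ ↥(LinearMap.range Aq.mulVecLin) := hQ''.fintype_card_le_finrank
    _ = Aq.rank := rfl
  have hrq : Aq.rank = m := le_antisymm hle hge
  have hspan : Submodule.span ℚ (Set.range Aqᵀ) = ⊤ := by
    apply Submodule.eq_top_of_finrank_eq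
    rw [show Set.range Aqᵀ = Set.range Aq.col from rfl]
    rw [← Matrix.rank_eq_finrank_span_cols, hrq, Module.finrank_fintype_fun_eq_card,
      Fintype.card_fin]
  obtain ⟨bset, hbsub, hbspan, hbind⟩ := exists_linearIndependent ℚ (Set.range Aqᵀ)
  rw [hspan] at hbspan
  have hbfin : bset.Finite := hbind.setFinite
  haveI := hbfin.fintype
  have hbas : Module.Basis bset ℚ (Fin m → ℚ) := Module.Basis.mk hbind (by rw [← hbspan, Subtype.range_coe])
  have hcard : Fintype.card bset = m := by
    have := Module.finrank_eq_card_basis hbas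
    rw [Module.finrank_fintype_fun_eq_card, Fintype.card_fin] at this
    omega
  have e : Fin m ≃ bset := (Fintype.equivFinOfCardEq hcard).symm
  have hchoose : ∀ v : bset, ∃ j : Fin n, Aqᵀ j = (v : Fin m → ℚ) := fun v => hbsub v.2
  choose φ hφ using hchoose
  have hφinj : Function.Injective φ := by
    intro v v' hvv'
    have : (v : Fin m → ℚ) = (v' : Fin m → ℚ) := by rw [← hφ v, ← hφ v', hvv']
    exact Subtype.ext this
  refine ⟨fun i => φ (e i), hφinj.comp e.injective, ?_⟩
  have hdq : (Aq.submatrix id (fun i => φ (e i))).det ≠ 0 := by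
    apply det_ne_zero_of_cols_indep
    have : (fun (j : Fin m) (i : Fin m) => (Aq.submatrix id (fun i => φ (e i))) i j)
        = fun j => ((e j : bset) : Fin m → ℚ) := by
      funext j
      funext i
      have h1 : Aqᵀ (φ (e j)) = ((e j : bset) : Fin m → ℚ) := hφ (e j)
      have := congrFun h1 i
      simpa [Matrix.submatrix, Matrix.transpose] using this
    rw [this]
    exact hbind.comp e e.injective
  intro hz
  apply hdq
  have : (Aq.submatrix id (fun i => φ (e i))) = (A.submatrix id (fun i => φ (e i))).map
      (Int.cast : ℤ → ℚ) := rfl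
  have hmd := (Int.castRingHom ℚ).map_det (A.submatrix id fun i => φ (e i))
  have h2 : ((A.submatrix id fun i => φ (e i)).map (Int.cast : ℤ → ℚ))
      = (A.submatrix id fun i => φ (e i)).map ⇑(Int.castRingHom ℚ) := rfl
  rw [RingHom.mapMatrix_apply] at hmd
  rw [this, h2, ← hmd, hz]
  norm_num

lemma exists_basisP (A : Matrix (Fin m) (Fin n) ℤ) (hrank : A.rank = m) :
    ∃ β, IsBasisP A β := by
  obtain ⟨β, hinj, hdet⟩ := exists_intdet A hrank
  refine ⟨β, hinj, ?_⟩
  rw [isUnit_iff_ne_zero]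
  have : ABR A β = (A.submatrix id β).map (Int.cast : ℤ → ℝ) := rfl
  have hmd := (Int.castRingHom ℝ).map_det (A.submatrix id β)
  rw [RingHom.mapMatrix_apply] at hmd
  rw [this, show ((A.submatrix id β).map (Int.cast : ℤ → ℝ))
    = (A.submatrix id β).map ⇑(Int.castRingHom ℝ) from rfl, ← hmd]
  simpa using hdet

/-- decomposition of the objective along any price vector -/
lemma obj_decomp (A : Matrix (Fin m) (Fin n) ℤ) (d : Fin n → ℝ) (yv : Fin m → ℝ)
    (x : Fin n → ℝ) (b' : Fin m → ℝ) (hx : (A.map (Int.cast : ℤ → ℝ)).mulVec x = b') :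
    d ⬝ᵥ x = yv ⬝ᵥ b' + ∑ j, (d j - yv ⬝ᵥ (fun i => (A i j : ℝ))) * x j := by
  have h1 : ∑ j, (yv ⬝ᵥ (fun i => (A i j : ℝ))) * x j
      = yv ⬝ᵥ ((A.map (Int.cast : ℤ → ℝ)).mulVec x) := by
    simp only [dotProduct, Matrix.mulVec, Matrix.map_apply, Finset.mul_sum,
      Finset.sum_mul]
    rw [Finset.sum_comm]
    apply Finset.sum_congr rfl; intro i _
    apply Finset.sum_congr rfl; intro j _
    ring
  rw [hx] at h1
  simp only [sub_mul, Finset.sum_sub_distrib, h1]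
  ring_nf
  simp [dotProduct]

lemma redCost_eq (A : Matrix (Fin m) (Fin n) ℤ) (d : Fin n → ℝ) (β : Fin m → Fin n) (j : Fin n) :
    redCost A d β j
      = d j - (fun k => d (β k)) ⬝ᵥ ((ABR A β)⁻¹.mulVec (fun i => (A i j : ℝ))) := by
  rw [redCost, Matrix.dotProduct_mulVec]

lemma redCost_basic (A : Matrix (Fin m) (Fin n) ℤ) (d : Fin n → ℝ) (β : Fin m → Fin n)
    (hdet : IsUnit (ABR A β).det) (i : Fin m) : redCost A d β (β i) = 0 := by
  have h1 : (fun k => (A k (β i) : ℝ)) = fun k => (ABR A β) k i := by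
    funext k; rfl
  rw [redCost, h1]
  have h2 : dotProduct (Matrix.vecMul (fun k => d (β k)) (ABR A β)⁻¹)
      (fun k => (ABR A β) k i)
      = Matrix.vecMul (Matrix.vecMul (fun k => d (β k)) (ABR A β)⁻¹) (ABR A β) i := rfl
  rw [h2, Matrix.vecMul_vecMul, Matrix.nonsing_inv_mul _ hdet, Matrix.vecMul_one]
  ring

/-- The basic solution associated to a basis. -/
def xstar (A : Matrix (Fin m) (Fin n) ℤ) (β : Fin m → Fin n) (b' : Fin m → ℝ) : Fin n → ℝ :=
  fun j => ∑ i, if β i = j then ((ABR A β)⁻¹.mulVec b') i else 0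

lemma xstar_nonneg (A : Matrix (Fin m) (Fin n) ℤ) (β : Fin m → Fin n) (b' : Fin m → ℝ)
    (hfeas : ∀ i, 0 ≤ ((ABR A β)⁻¹.mulVec b') i) (j : Fin n) : 0 ≤ xstar A β b' j := by
  apply Finset.sum_nonneg
  intro i _
  split
  · exact hfeas i
  · exact le_refl 0

lemma mulVec_xstar (A : Matrix (Fin m) (Fin n) ℤ) (β : Fin m → Fin n) (b' : Fin m → ℝ)
    (hdet : IsUnit (ABR A β).det) :
    (A.map (Int.cast : ℤ → ℝ)).mulVec (xstar A β b') = b' := by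
  funext r
  have key : (A.map (Int.cast : ℤ → ℝ)).mulVec (xstar A β b') r
      = ((ABR A β).mulVec ((ABR A β)⁻¹.mulVec b')) r := by
    simp only [Matrix.mulVec, dotProduct, xstar, Matrix.map_apply, Finset.mul_sum,
      mul_ite, mul_zero]
    rw [Finset.sum_comm]
    apply Finset.sum_congr rfl
    intro i _
    rw [Finset.sum_ite_eq Finset.univ (β i)
      (fun j => ∑ i1, ((A r j : ℝ)) * ((ABR A β)⁻¹ i i1 * b' i1))]
    simp [ABR]
  rw [key, Matrix.mulVec_mulVec, Matrix.mul_nonsing_inv _ hdet, Matrix.one_mulVec]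

lemma dot_xstar (A : Matrix (Fin m) (Fin n) ℤ) (β : Fin m → Fin n) (b' : Fin m → ℝ)
    (d : Fin n → ℝ) :
    d ⬝ᵥ xstar A β b' = (fun k => d (β k)) ⬝ᵥ ((ABR A β)⁻¹.mulVec b') := by
  simp only [dotProduct, xstar, Finset.mul_sum, mul_ite, mul_zero]
  rw [Finset.sum_comm]
  apply Finset.sum_congr rfl
  intro i _
  rw [Finset.sum_ite_eq Finset.univ (β i) (fun j => d j * ((ABR A β)⁻¹.mulVec b') i)]
  simp

/-- A feasible basis with nonnegative reduced costs certifies membership in `IFR_G`. -/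
lemma mem_IFR_G_of_redCost_nonneg (A : Matrix (Fin m) (Fin n) ℤ) (b : Fin m → ℤ)
    (d : Fin n → ℝ) (β : Fin m → Fin n) (x₀ : Fin n → ℤ)
    (hβ : FeasBasis A b β) (hred : ∀ j, 0 ≤ redCost A d β j) (hd : d ∈ IFR_LP A b x₀) :
    d ∈ IFR_G A b β x₀ := by
  intro x hx
  set bRv : Fin m → ℝ := fun i => (b i : ℝ) with hbRv
  set y := Matrix.vecMul (fun i => d (β i)) (ABR A β)⁻¹ with hy
  have hxR : (A.map (Int.cast : ℤ → ℝ)).mulVec (fun j => (x j : ℝ)) = bRv := by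
    funext r
    have := congrFun hx.1 r
    simp only [Matrix.mulVec, dotProduct, Matrix.map_apply, hbRv] at this ⊢
    push_cast
    exact_mod_cast congrArg (Int.cast : ℤ → ℝ) this
  have hdec := obj_decomp A d y (fun j => (x j : ℝ)) bRv hxR
  have hyb : y ⬝ᵥ bRv = d ⬝ᵥ xstar A β bRv := by
    rw [dot_xstar, hy, ← Matrix.dotProduct_mulVec]
  have hstar_feas : LPfeas A b (xstar A β bRv) :=
    ⟨mulVec_xstar A β bRv hβ.2.1, xstar_nonneg A β bRv hβ.2.2⟩
  have h1 : objZ d x₀ ≤ obj d (xstar A β bRv) := hd _ hstar_feas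
  have h2 : 0 ≤ ∑ j, (d j - y ⬝ᵥ (fun i => (A i j : ℝ))) * (x j : ℝ) := by
    apply Finset.sum_nonneg; intro j _
    by_cases hjb : ∃ i, β i = j
    · obtain ⟨i, rfl⟩ := hjb
      have hz := redCost_basic A d β hβ.2.1 i
      have : d (β i) - y ⬝ᵥ (fun k => (A k (β i) : ℝ)) = redCost A d β (β i) := rfl
      rw [this, hz, zero_mul]
    · have hge : 0 ≤ d j - y ⬝ᵥ (fun i => (A i j : ℝ)) := hred j
      have hxj : 0 ≤ (x j : ℝ) := by
        have : j ∉ Finset.image β Finset.univ := by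
          simpa [Finset.mem_image] using hjb
        exact_mod_cast hx.2 j this
      exact mul_nonneg hge hxj
  have hobj : obj d (xstar A β bRv) = d ⬝ᵥ xstar A β bRv := rfl
  have hZ : objZ d x = d ⬝ᵥ (fun j => (x j : ℝ)) := rfl
  calc objZ d x₀ ≤ obj d (xstar A β bRv) := h1
  _ = y ⬝ᵥ bRv := by rw [hobj, hyb]
  _ ≤ d ⬝ᵥ (fun j => (x j : ℝ)) := by rw [hdec]; linarith
  _ = objZ d x := hZ.symm

lemma span_cols_top (A : Matrix (Fin m) (Fin n) ℤ) (β : Fin m → Fin n) (hβ : IsBasisP A β) :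
    Submodule.span ℝ (Set.range (fun j (i : Fin m) => (A i j : ℝ))) = ⊤ := by
  rw [Submodule.eq_top_iff']
  intro w
  have hw : w = ∑ i, ((ABR A β)⁻¹.mulVec w) i • (fun r => (A r (β i) : ℝ)) := by
    funext r
    rw [Finset.sum_apply]
    simp only [Pi.smul_apply, smul_eq_mul]
    have h1 : ∑ i, ((ABR A β)⁻¹.mulVec w) i * (A r (β i) : ℝ)
        = ((ABR A β).mulVec ((ABR A β)⁻¹.mulVec w)) r := by
      simp [Matrix.mulVec, dotProduct, ABR, mul_comm]
    rw [h1, Matrix.mulVec_mulVec, Matrix.mul_nonsing_inv _ hβ.2, Matrix.one_mulVec]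
  rw [hw]
  exact Submodule.sum_mem _ fun i _ =>
    Submodule.smul_mem _ _ (Submodule.subset_span ⟨β i, rfl⟩)

lemma extend_to_card (col : Fin n → (Fin m → ℝ))
    (hspan : Submodule.span ℝ (Set.range col) = ⊤) :
    ∀ (k : ℕ) (s : Finset (Fin n)), LinearIndependent ℝ (fun i : s => col i) → s.card + k = m →
    ∃ t : Finset (Fin n), s ⊆ t ∧ t.card = m ∧ LinearIndependent ℝ (fun i : t => col i) := by
  intro k
  induction k with
  | zero =>
    intro s hs hc
    exact ⟨s, subset_rfl, by omega, hs⟩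
  | succ k ih =>
    intro s hs hc
    classical
    have hinj : Set.InjOn col ↑s := by
      intro a ha b hb hab
      have := hs.injective (a₁ := ⟨a, ha⟩) (a₂ := ⟨b, hb⟩) hab
      exact congrArg Subtype.val this
    have hsetind : LinearIndependent ℝ ((↑) : (col '' ↑s) → (Fin m → ℝ)) :=
      (linearIndepOn_iff_image hinj).1 hs
    have hne : Submodule.span ℝ (col '' ↑s) ≠ ⊤ := by
      intro hEq
      have h1 : Module.finrank ℝ (Submodule.span ℝ (↑(s.image col) : Set (Fin m → ℝ)))
          ≤ (s.image col).card := finrank_span_finset_le_card _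
      rw [Finset.coe_image, hEq] at h1
      have h2 : (s.image col).card ≤ s.card := Finset.card_image_le
      have h3 : Module.finrank ℝ (⊤ : Submodule ℝ (Fin m → ℝ)) = m := by
        rw [finrank_top, Module.finrank_fintype_fun_eq_card, Fintype.card_fin]
      omega
    have hexj : ∃ j, col j ∉ Submodule.span ℝ (col '' ↑s) := by
      by_contra hcon
      push_neg at hcon
      apply hne
      rw [eq_top_iff, ← hspan]
      apply Submodule.span_le.2
      rintro - ⟨j, rfl⟩
      exact hcon j
    obtain ⟨j, hj⟩ := hexj
    have hjs : j ∉ s := fun hjs => hj (Submodule.subset_span ⟨j, hjs, rfl⟩)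
    have hjimg : col j ∉ col '' ↑s := fun hmem => hj (Submodule.subset_span hmem)
    have hinsset : LinearIndependent ℝ ((↑) : (insert (col j) (col '' ↑s) : Set (Fin m → ℝ)) → (Fin m → ℝ)) :=
      LinearIndepOn.id_insert hsetind hj
    have hinj' : Set.InjOn col ↑(insert j s) := by
      rw [Finset.coe_insert]
      exact (Set.injOn_insert hjs).2 ⟨hinj, hjimg⟩
    have himg : col '' ↑(insert j s) = insert (col j) (col '' ↑s) := by
      rw [Finset.coe_insert, Set.image_insert_eq]
    have hind' : LinearIndependent ℝ (fun i : (insert j s : Finset (Fin n)) => col i) := by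
      refine (linearIndepOn_iff_image hinj').2 ?_
      rw [himg]
      exact hinsset
    have hcard' : (insert j s).card + k = m := by
      rw [Finset.card_insert_of_notMem hjs]; omega
    obtain ⟨t, hst, htc, hti⟩ := ih (insert j s) hind' hcard'
    exact ⟨t, (Finset.subset_insert j s).trans hst, htc, hti⟩

lemma reduce_support (A : Matrix (Fin m) (Fin n) ℤ) (b : Fin m → ℤ) (x : Fin n → ℝ)
    (hx : LPfeas A b x) (u : Fin n → ℝ)
    (hu : (A.map (Int.cast : ℤ → ℝ)).mulVec u = 0)
    (hsupp : ∀ j, u j ≠ 0 → x j ≠ 0) (j₁ : Fin n) (hj₁ : 0 < u j₁) :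
    ∃ x', LPfeas A b x' ∧ (Finset.univ.filter (fun j => x' j ≠ 0)).card <
      (Finset.univ.filter (fun j => x j ≠ 0)).card := by
  classical
  set T := Finset.univ.filter (fun j => 0 < u j) with hT
  have hTne : T.Nonempty := ⟨j₁, by simp [hT, hj₁]⟩
  obtain ⟨j₀, hj₀T, hj₀min⟩ := T.exists_min_image (fun j => x j / u j) hTne
  have hj₀pos : 0 < u j₀ := by
    have := Finset.mem_filter.1 hj₀T
    exact this.2
  set t := x j₀ / u j₀ with ht
  have htnn : 0 ≤ t := div_nonneg (hx.2 j₀) hj₀pos.le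
  set x' := fun j => x j - t * u j with hx'
  have hfe : LPfeas A b x' := by
    constructor
    · funext r
      have h1 := congrFun hx.1 r
      have h2 := congrFun hu r
      simp only [Matrix.mulVec, dotProduct, Matrix.map_apply, Pi.zero_apply] at h1 h2 ⊢
      have : ∑ j, (A r j : ℝ) * x' j
          = ∑ j, (A r j : ℝ) * x j - t * ∑ j, (A r j : ℝ) * u j := by
        rw [Finset.mul_sum, ← Finset.sum_sub_distrib]
        apply Finset.sum_congr rfl
        intro j _
        simp only [hx']
        ring
      rw [this, h1, h2]
      simp
    · intro j
      by_cases hj : 0 < u j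
      · have hmin := hj₀min j (Finset.mem_filter.2 ⟨Finset.mem_univ j, hj⟩)
        have h1 : t * u j ≤ (x j / u j) * u j :=
          mul_le_mul_of_nonneg_right hmin hj.le
        rw [div_mul_cancel₀ _ (ne_of_gt hj)] at h1
        simp only [hx']
        linarith
      · have h1 : u j ≤ 0 := le_of_not_gt hj
        have := hx.2 j
        simp only [hx']
        nlinarith
  refine ⟨x', hfe, Finset.card_lt_card ?_⟩
  rw [Finset.ssubset_def]
  constructor
  · intro j hj
    rw [Finset.mem_filter] at hj ⊢
    refine ⟨Finset.mem_univ j, ?_⟩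
    intro hxj
    apply hj.2
    have huj : u j = 0 := by
      by_contra hne
      exact hsupp j hne hxj
    simp [hx', hxj, huj]
  · intro hcon
    have hj₀x : x j₀ ≠ 0 := hsupp j₀ (ne_of_gt hj₀pos)
    have hj₀mem := hcon (Finset.mem_filter.2 ⟨Finset.mem_univ j₀, hj₀x⟩)
    rw [Finset.mem_filter] at hj₀mem
    apply hj₀mem.2
    simp only [hx', ht]
    rw [div_mul_cancel₀ _ (ne_of_gt hj₀pos)]
    ring

lemma exists_feasBasis (A : Matrix (Fin m) (Fin n) ℤ) (b : Fin m → ℤ)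
    (hB : ∃ β, IsBasisP A β) (hfe : ∃ x, LPfeas A b x) :
    ∃ β, FeasBasis A b β := by
  classical
  obtain ⟨β₀, hβ₀⟩ := hB
  have hspan := span_cols_top A β₀ hβ₀
  have hex : ∃ k, ∃ x, LPfeas A b x ∧ (Finset.univ.filter (fun j => x j ≠ 0)).card = k := by
    obtain ⟨x, hx⟩ := hfe
    exact ⟨_, x, hx, rfl⟩
  obtain ⟨x, hxfeas, hxcard⟩ := Nat.find_spec hex
  set k₀ := Nat.find hex with hk₀
  set supp := Finset.univ.filter (fun j => x j ≠ 0) with hsuppdef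
  have hxoff : ∀ j, j ∉ supp → x j = 0 := by
    intro j hj
    by_contra hne
    exact hj (Finset.mem_filter.2 ⟨Finset.mem_univ j, hne⟩)
  have hind : LinearIndependent ℝ (fun j : supp => (fun i => (A i (j : Fin n) : ℝ))) := by
    by_contra hdep
    obtain ⟨g, hg0, i₀, hi₀⟩ := Fintype.not_linearIndependent_iff.1 hdep
    set u : Fin n → ℝ := fun j => if h : j ∈ supp then g ⟨j, h⟩ else 0 with hu
    have husum : ∑ j, u j • (fun i => (A i j : ℝ)) = 0 := by
      rw [← Finset.sum_subset (Finset.subset_univ supp)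
        (fun j _ hj => by simp [hu, dif_neg hj])]
      rw [← Finset.sum_attach supp (fun j => u j • (fun i => (A i j : ℝ)))]
      rw [← hg0]
      apply Finset.sum_congr rfl
      intro j _
      simp [hu, dif_pos j.2]
    have hMu : (A.map (Int.cast : ℤ → ℝ)).mulVec u = 0 := by
      funext r
      have := congrFun husum r
      simp only [Finset.sum_apply, Pi.smul_apply, smul_eq_mul, Pi.zero_apply] at this ⊢
      simp only [Matrix.mulVec, dotProduct, Matrix.map_apply]
      rw [← this]
      apply Finset.sum_congr rfl
      intro j _
      ring
    have husupp : ∀ j, u j ≠ 0 → x j ≠ 0 := by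
      intro j hj
      by_cases hjs : j ∈ supp
      · exact (Finset.mem_filter.1 hjs).2
      · simp [hu, dif_neg hjs] at hj
    have hune : u (i₀ : Fin n) ≠ 0 := by
      simpa [hu, dif_pos i₀.2] using hi₀
    have hred : ∃ x', LPfeas A b x' ∧ (Finset.univ.filter (fun j => x' j ≠ 0)).card <
        (Finset.univ.filter (fun j => x j ≠ 0)).card := by
      rcases lt_or_gt_of_ne hune with hlt | hgt
      · apply reduce_support A b x hxfeas (-u) (by rw [Matrix.mulVec_neg, hMu, neg_zero])
          (fun j hj => husupp j (by simpa using hj)) i₀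
        simpa using hlt
      · exact reduce_support A b x hxfeas u hMu husupp i₀ hgt
    obtain ⟨x', hx'feas, hx'card⟩ := hred
    rw [hxcard] at hx'card
    exact Nat.find_min hex hx'card ⟨x', hx'feas, rfl⟩
  have hcardle : supp.card ≤ m := by
    have h1 : Fintype.card supp ≤ Module.finrank ℝ (Fin m → ℝ) :=
      hind.fintype_card_le_finrank
    rw [Module.finrank_fintype_fun_eq_card, Fintype.card_fin, Fintype.card_coe] at h1
    exact h1
  obtain ⟨tset, hst, htc, hti⟩ := extend_to_card (fun j i => (A i j : ℝ)) hspan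
    (m - supp.card) supp hind (by omega)
  set e := tset.orderIsoOfFin htc with he
  set β : Fin m → Fin n := fun i => (e i : Fin n) with hβdef
  have hβinj : Function.Injective β := by
    intro a b hab
    exact e.injective (Subtype.ext hab)
  have hdet : IsUnit (ABR A β).det := by
    rw [isUnit_iff_ne_zero]
    apply det_ne_zero_of_cols_indep
    have : (fun (k : Fin m) (i : Fin m) => (ABR A β) i k)
        = (fun v : tset => (fun i => (A i (v : Fin n) : ℝ))) ∘ (fun k => e k) := by
      funext k i
      rfl
    rw [this]
    exact hti.comp _ (e.injective)
  have hABx : (ABR A β).mulVec (fun i => x (β i)) = (fun i => (b i : ℝ)) := by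
    funext r
    have h1 : ∑ i : Fin m, (A r (β i) : ℝ) * x (β i)
        = ∑ v : {x // x ∈ tset}, (A r (v : Fin n) : ℝ) * x (v : Fin n) := by
      rw [← Equiv.sum_comp e.toEquiv (fun v : {x // x ∈ tset} =>
        (A r (v : Fin n) : ℝ) * x (v : Fin n))]
      rfl
    have h2 : ∑ v : {x // x ∈ tset}, (A r (v : Fin n) : ℝ) * x (v : Fin n)
        = ∑ j ∈ tset, (A r j : ℝ) * x j := Finset.sum_coe_sort tset (fun j => (A r j : ℝ) * x j)
    have h3 : ∑ j ∈ tset, (A r j : ℝ) * x j = ∑ j, (A r j : ℝ) * x j := by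
      apply Finset.sum_subset (Finset.subset_univ tset)
      intro j _ hj
      have : x j = 0 := hxoff j (fun hjs => hj (hst hjs))
      rw [this, mul_zero]
    have h4 := congrFun hxfeas.1 r
    simp only [Matrix.mulVec, dotProduct, Matrix.map_apply] at h4 ⊢
    simp only [ABR, Matrix.submatrix_apply, Matrix.map_apply, id_eq]
    rw [h1, h2, h3, h4]
  refine ⟨β, hβinj, hdet, ?_⟩
  have hxeq : (ABR A β)⁻¹.mulVec (fun i => (b i : ℝ)) = fun i => x (β i) := by
    rw [← hABx, Matrix.mulVec_mulVec, Matrix.nonsing_inv_mul _ hdet, Matrix.one_mulVec]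
  rw [hxeq]
  intro i
  exact hxfeas.2 (β i)

lemma pivot_step (A : Matrix (Fin m) (Fin n) ℤ) (d : Fin n → ℝ) (b' : Fin m → ℝ)
    (β : Fin m → Fin n) (hβ : IsBasisP A β)
    (hfeas : ∀ i, 0 ≤ ((ABR A β)⁻¹.mulVec b') i)
    (hnd : ∀ i, ((ABR A β)⁻¹.mulVec b') i ≠ 0)
    (j : Fin n) (hj : redCost A d β j < 0)
    (hrec : ∀ u : Fin n → ℝ, (∀ j', 0 ≤ u j') →
      (A.map (Int.cast : ℤ → ℝ)).mulVec u = 0 → 0 ≤ d ⬝ᵥ u) :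
    ∃ β', (IsBasisP A β' ∧ ∀ i, 0 ≤ ((ABR A β')⁻¹.mulVec b') i) ∧
      (fun k => d (β' k)) ⬝ᵥ ((ABR A β')⁻¹.mulVec b')
        < (fun k => d (β k)) ⬝ᵥ ((ABR A β)⁻¹.mulVec b') := by
  classical
  set xB := (ABR A β)⁻¹.mulVec b' with hxB
  set u := (ABR A β)⁻¹.mulVec (fun i => (A i j : ℝ)) with hudef
  have hABu : (ABR A β).mulVec u = (fun i => (A i j : ℝ)) := by
    rw [hudef, Matrix.mulVec_mulVec, Matrix.mul_nonsing_inv _ hβ.2, Matrix.one_mulVec]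
  have hABx : (ABR A β).mulVec xB = b' := by
    rw [hxB, Matrix.mulVec_mulVec, Matrix.mul_nonsing_inv _ hβ.2, Matrix.one_mulVec]
  have hABu' : ∀ r, ∑ k, (A r (β k) : ℝ) * u k = (A r j : ℝ) := by
    intro r
    have := congrFun hABu r
    simpa [Matrix.mulVec, dotProduct, ABR] using this
  have hABx' : ∀ r, ∑ k, (A r (β k) : ℝ) * xB k = b' r := by
    intro r
    have := congrFun hABx r
    simpa [Matrix.mulVec, dotProduct, ABR] using this
  have hrc : redCost A d β j = d j - (fun k => d (β k)) ⬝ᵥ u := by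
    rw [redCost_eq]
  by_cases hpos : ∃ i, 0 < u i
  · -- ratio test
    obtain ⟨i₁, hi₁⟩ := hpos
    set T := Finset.univ.filter (fun i => 0 < u i) with hT
    have hTne : T.Nonempty := ⟨i₁, by simp [hT, hi₁]⟩
    obtain ⟨i₀, hi₀T, hi₀min⟩ := T.exists_min_image (fun i => xB i / u i) hTne
    have hu0 : 0 < u i₀ := (Finset.mem_filter.1 hi₀T).2
    set t := xB i₀ / u i₀ with ht
    have hxB0 : 0 < xB i₀ := lt_of_le_of_ne (hfeas i₀) (Ne.symm (hnd i₀))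
    have htpos : 0 < t := div_pos hxB0 hu0
    have hjr : ∀ i, β i ≠ j := by
      intro i hi
      have h0 := redCost_basic A d β hβ.2 i
      rw [hi] at h0
      linarith
    set β' := Function.update β i₀ j with hβ'def
    have hβ'i₀ : β' i₀ = j := Function.update_self i₀ j β
    have hβ'ne : ∀ k, k ≠ i₀ → β' k = β k := fun k hk => Function.update_of_ne hk j β
    have hβ'inj : Function.Injective β' := by
      intro a c hac
      by_cases ha : a = i₀ <;> by_cases hc : c = i₀
      · rw [ha, hc]
      · rw [ha, hβ'i₀, hβ'ne c hc] at hac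
        exact absurd hac.symm (hjr c)
      · rw [hc, hβ'i₀, hβ'ne a ha] at hac
        exact absurd hac (hjr a)
      · rw [hβ'ne a ha, hβ'ne c hc] at hac
        exact hβ.1 hac
    set E := (1 : Matrix (Fin m) (Fin m) ℝ).updateCol i₀ u with hE
    have hfact : ABR A β' = ABR A β * E := by
      ext r k
      rw [Matrix.mul_apply]
      by_cases hk : k = i₀
      · subst hk
        have h1 : ∀ l, (ABR A β) r l * E l k = (A r (β l) : ℝ) * u l := by
          intro l
          rw [hE, Matrix.updateCol_self]
          rfl
        rw [Finset.sum_congr rfl (fun l _ => h1 l), hABu' r]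
        simp [ABR, hβ'i₀]
      · have h1 : ∀ l, (ABR A β) r l * E l k = if l = k then (ABR A β) r l else 0 := by
          intro l
          rw [hE, Matrix.updateCol_ne hk, Matrix.one_apply]
          split <;> simp
        rw [Finset.sum_congr rfl (fun l _ => h1 l),
          Finset.sum_ite_eq' Finset.univ k (fun l => (ABR A β) r l)]
        simp [ABR, hβ'ne k hk]
    have hdetE : E.det = u i₀ := by
      have h1 := Matrix.cramer_apply (A := (1 : Matrix (Fin m) (Fin m) ℝ)) (b := u) i₀
      rw [Matrix.cramer_one] at h1
      rw [hE, ← h1]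
      rfl
    have hdet' : IsUnit (ABR A β').det := by
      rw [hfact, Matrix.det_mul, hdetE]
      exact hβ.2.mul (isUnit_iff_ne_zero.2 (ne_of_gt hu0))
    set x' := Function.update (fun k => xB k - u k * t) i₀ t with hx'def
    have hx'i₀ : x' i₀ = t := Function.update_self _ _ _
    have hx'ne : ∀ k, k ≠ i₀ → x' k = xB k - u k * t := fun k hk => Function.update_of_ne hk _ _
    have hzero : xB i₀ - u i₀ * t = 0 := by
      rw [ht]
      field_simp
      ring
    have hABx'2 : (ABR A β').mulVec x' = b' := by
      funext r
      have hLHS : (ABR A β').mulVec x' r = ∑ k, (A r (β' k) : ℝ) * x' k := by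
        simp [Matrix.mulVec, dotProduct, ABR]
      rw [hLHS]
      rw [← Finset.add_sum_erase Finset.univ (fun k => (A r (β' k) : ℝ) * x' k)
        (Finset.mem_univ i₀)]
      have h2 : ∑ k ∈ Finset.univ.erase i₀, (A r (β' k) : ℝ) * x' k
          = ∑ k ∈ Finset.univ.erase i₀, (A r (β k) : ℝ) * (xB k - u k * t) := by
        apply Finset.sum_congr rfl
        intro k hk
        have hk' := Finset.ne_of_mem_erase hk
        rw [hβ'ne k hk', hx'ne k hk']
      have h3 : ∑ k ∈ Finset.univ.erase i₀, (A r (β k) : ℝ) * (xB k - u k * t)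
          = (∑ k, (A r (β k) : ℝ) * (xB k - u k * t))
            - (A r (β i₀) : ℝ) * (xB i₀ - u i₀ * t) := by
        rw [← Finset.add_sum_erase Finset.univ
          (fun k => (A r (β k) : ℝ) * (xB k - u k * t)) (Finset.mem_univ i₀)]
        ring
      have h4 : ∑ k, (A r (β k) : ℝ) * (xB k - u k * t)
          = b' r - t * (A r j : ℝ) := by
        have h5 : ∀ k, (A r (β k) : ℝ) * (xB k - u k * t)
            = (A r (β k) : ℝ) * xB k - t * ((A r (β k) : ℝ) * u k) := by intro k; ring
        rw [Finset.sum_congr rfl (fun k _ => h5 k), Finset.sum_sub_distrib, ← Finset.mul_sum,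
          hABx' r, hABu' r]
      rw [h2, h3, h4, hzero, hβ'i₀, hx'i₀]
      ring
    have hinv' : (ABR A β')⁻¹.mulVec b' = x' := by
      rw [← hABx'2, Matrix.mulVec_mulVec, Matrix.nonsing_inv_mul _ hdet', Matrix.one_mulVec]
    refine ⟨β', ⟨⟨hβ'inj, hdet'⟩, ?_⟩, ?_⟩
    · intro k
      rw [hinv']
      by_cases hk : k = i₀
      · rw [hk, hx'i₀]; exact htpos.le
      · rw [hx'ne k hk]
        by_cases hku : 0 < u k
        · have hmin := hi₀min k (Finset.mem_filter.2 ⟨Finset.mem_univ k, hku⟩)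
          have h1 : t * u k ≤ (xB k / u k) * u k := mul_le_mul_of_nonneg_right hmin hku.le
          rw [div_mul_cancel₀ _ (ne_of_gt hku)] at h1
          linarith
        · have h1 : u k ≤ 0 := le_of_not_gt hku
          have := hfeas k
          nlinarith
    · rw [hinv']
      have hdot' : (fun k => d (β' k)) ⬝ᵥ x'
          = (fun k => d (β k)) ⬝ᵥ xB + t * redCost A d β j := by
        rw [hrc]
        simp only [dotProduct]
        rw [← Finset.add_sum_erase Finset.univ (fun k => d (β' k) * x' k) (Finset.mem_univ i₀)]
        have h2 : ∑ k ∈ Finset.univ.erase i₀, d (β' k) * x' k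
            = ∑ k ∈ Finset.univ.erase i₀, d (β k) * (xB k - u k * t) := by
          apply Finset.sum_congr rfl
          intro k hk
          have hk' := Finset.ne_of_mem_erase hk
          rw [hβ'ne k hk', hx'ne k hk']
        have h3 : ∑ k ∈ Finset.univ.erase i₀, d (β k) * (xB k - u k * t)
            = (∑ k, d (β k) * (xB k - u k * t)) - d (β i₀) * (xB i₀ - u i₀ * t) := by
          rw [← Finset.add_sum_erase Finset.univ
            (fun k => d (β k) * (xB k - u k * t)) (Finset.mem_univ i₀)]
          ring
        have h4 : ∑ k, d (β k) * (xB k - u k * t)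
            = (∑ k, d (β k) * xB k) - t * (∑ k, d (β k) * u k) := by
          rw [Finset.mul_sum, ← Finset.sum_sub_distrib]
          exact Finset.sum_congr rfl (fun k _ => by ring)
        rw [h2, h3, h4, hzero, hβ'i₀, hx'i₀]
        ring
      rw [hdot']
      have hneg : t * redCost A d β j < 0 := mul_neg_of_pos_of_neg htpos hj
      linarith
  · exfalso
    push_neg at hpos
    set w : Fin n → ℝ := fun j' => (if j' = j then 1 else 0)
        - ∑ i, (if β i = j' then u i else 0) with hw
    have hsum_nonpos : ∀ j', ∑ i, (if β i = j' then u i else 0) ≤ 0 := by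
      intro j'
      apply Finset.sum_nonpos
      intro i _
      split
      · exact hpos i
      · exact le_refl 0
    have hwnn : ∀ j', 0 ≤ w j' := by
      intro j'
      have := hsum_nonpos j'
      by_cases hj' : j' = j
      · simp only [hw, if_pos hj']; linarith
      · simp only [hw, if_neg hj']; linarith
    have hMw : (A.map (Int.cast : ℤ → ℝ)).mulVec w = 0 := by
      funext r
      simp only [Matrix.mulVec, dotProduct, Matrix.map_apply, Pi.zero_apply, hw,
        mul_sub, mul_ite, mul_one, mul_zero]
      rw [Finset.sum_sub_distrib]
      rw [Finset.sum_ite_eq' Finset.univ j (fun j' => (A r j' : ℝ))]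
      simp only [Finset.mem_univ, if_true]
      have hpush : ∀ j', (A r j' : ℝ) * ∑ i, (if β i = j' then u i else 0)
          = ∑ i, (if β i = j' then (A r j' : ℝ) * u i else 0) := by
        intro j'
        rw [Finset.mul_sum]
        exact Finset.sum_congr rfl (fun i _ => by split <;> simp)
      simp only [hpush]
      have hswap : ∑ j', ∑ i, (if β i = j' then (A r j' : ℝ) * u i else 0)
          = ∑ i, ∑ j', (if β i = j' then (A r j' : ℝ) * u i else 0) := Finset.sum_comm
      have hinner : ∀ i, ∑ j', (if β i = j' then (A r j' : ℝ) * u i else 0)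
          = (A r (β i) : ℝ) * u i := by
        intro i
        rw [Finset.sum_ite_eq Finset.univ (β i) (fun j' => (A r j' : ℝ) * u i)]
        simp
      have : ∑ j', ∑ i, (if β i = j' then (A r j' : ℝ) * u i else 0)
          = ∑ i, (A r (β i) : ℝ) * u i := by
        rw [hswap]
        exact Finset.sum_congr rfl (fun i _ => hinner i)
      rw [this, hABu' r]
      simp
    have hdw : d ⬝ᵥ w = redCost A d β j := by
      rw [hrc]
      simp only [dotProduct, hw, mul_sub, mul_ite, mul_one, mul_zero]
      rw [Finset.sum_sub_distrib]
      rw [Finset.sum_ite_eq' Finset.univ j (fun j' => d j')]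
      simp only [Finset.mem_univ, if_true]
      have hpush : ∀ j', d j' * ∑ i, (if β i = j' then u i else 0)
          = ∑ i, (if β i = j' then d j' * u i else 0) := by
        intro j'
        rw [Finset.mul_sum]
        exact Finset.sum_congr rfl (fun i _ => by split <;> simp)
      simp only [hpush]
      have hswap : ∑ j', ∑ i, (if β i = j' then d j' * u i else 0)
          = ∑ i, ∑ j', (if β i = j' then d j' * u i else 0) := Finset.sum_comm
      have hinner : ∀ i, ∑ j', (if β i = j' then d j' * u i else 0) = d (β i) * u i := by
        intro i
        rw [Finset.sum_ite_eq Finset.univ (β i) (fun j' => d j' * u i)]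
        simp
      rw [hswap, Finset.sum_congr rfl (fun i _ => hinner i)]
    have := hrec w hwnn hMw
    rw [hdw] at this
    linarith

lemma exists_opt_basis_nondeg (A : Matrix (Fin m) (Fin n) ℤ) (d : Fin n → ℝ) (b' : Fin m → ℝ)
    (hrec : ∀ u : Fin n → ℝ, (∀ j', 0 ≤ u j') →
      (A.map (Int.cast : ℤ → ℝ)).mulVec u = 0 → 0 ≤ d ⬝ᵥ u)
    (hex : ∃ β, IsBasisP A β ∧ ∀ i, 0 ≤ ((ABR A β)⁻¹.mulVec b') i)
    (hnd : ∀ β, IsBasisP A β → ∀ i, ((ABR A β)⁻¹.mulVec b') i ≠ 0) :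
    ∃ β, (IsBasisP A β ∧ ∀ i, 0 ≤ ((ABR A β)⁻¹.mulVec b') i) ∧ ∀ j, 0 ≤ redCost A d β j := by
  classical
  set S : Set (Fin m → Fin n) :=
    {β | IsBasisP A β ∧ ∀ i, 0 ≤ ((ABR A β)⁻¹.mulVec b') i} with hS
  have hSne : S.Nonempty := hex
  obtain ⟨β, hβS, hβmin⟩ := Set.exists_min_image S
    (fun β => (fun k => d (β k)) ⬝ᵥ ((ABR A β)⁻¹.mulVec b')) (Set.toFinite S) hSne
  refine ⟨β, hβS, ?_⟩
  intro j
  by_contra hneg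
  push_neg at hneg
  obtain ⟨β', hβ'S, hlt⟩ := pivot_step A d b' β hβS.1 hβS.2 (hnd β hβS.1) j hneg hrec
  have := hβmin β' hβ'S
  linarith

lemma cast_feas (A : Matrix (Fin m) (Fin n) ℤ) (b : Fin m → ℤ) (x : Fin n → ℤ)
    (h : A.mulVec x = b) :
    (A.map (Int.cast : ℤ → ℝ)).mulVec (fun j => (x j : ℝ)) = fun i => (b i : ℝ) := by
  funext r
  have := congrFun h r
  simp only [Matrix.mulVec, dotProduct, Matrix.map_apply] at this ⊢
  exact_mod_cast congrArg (Int.cast : ℤ → ℝ) this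

lemma recession (A : Matrix (Fin m) (Fin n) ℤ) (b : Fin m → ℤ) (x₀ : Fin n → ℤ) (d : Fin n → ℝ)
    (hx₀ : IPfeas A b x₀) (hd : d ∈ IFR_LP A b x₀) :
    ∀ u : Fin n → ℝ, (∀ j', 0 ≤ u j') →
      (A.map (Int.cast : ℤ → ℝ)).mulVec u = 0 → 0 ≤ d ⬝ᵥ u := by
  intro u hu hMu
  set x₀R : Fin n → ℝ := fun j => (x₀ j : ℝ) with hx₀R
  have hfeas : LPfeas A b (x₀R + u) := by
    constructor
    · rw [Matrix.mulVec_add, hMu, add_zero]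
      exact cast_feas A b x₀ hx₀.1
    · intro i
      have h1 : (0:ℝ) ≤ x₀R i := by
        simp only [hx₀R]
        exact_mod_cast hx₀.2 i
      have := hu i
      simp only [Pi.add_apply]
      linarith
  have h1 := hd _ hfeas
  have h2 : obj d (x₀R + u) = objZ d x₀ + d ⬝ᵥ u := by
    simp only [obj, objZ, dotProduct, Pi.add_apply, mul_add, Finset.sum_add_distrib,
      hx₀R]
  rw [h2] at h1
  linarith

lemma exists_optimal_feasBasis (A : Matrix (Fin m) (Fin n) ℤ) (b : Fin m → ℤ) (d : Fin n → ℝ)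
    (hB : ∃ β, IsBasisP A β) (hfe : ∃ x, LPfeas A b x)
    (hrec : ∀ u : Fin n → ℝ, (∀ j', 0 ≤ u j') →
      (A.map (Int.cast : ℤ → ℝ)).mulVec u = 0 → 0 ≤ d ⬝ᵥ u) :
    ∃ β, FeasBasis A b β ∧ ∀ j, 0 ≤ redCost A d β j := by
  classical
  obtain ⟨β₀, hβ₀feas⟩ := exists_feasBasis A b hB hfe
  have hβ₀ : IsBasisP A β₀ := ⟨hβ₀feas.1, hβ₀feas.2.1⟩
  set bRv : Fin m → ℝ := fun i => (b i : ℝ) with hbRv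
  set q : (Fin m → Fin n) → Fin m → Polynomial ℝ := fun β i =>
    Polynomial.C (((ABR A β)⁻¹.mulVec bRv) i)
      + ∑ k : Fin m, Polynomial.C (((ABR A β)⁻¹ * (ABR A β₀)) i k)
          * Polynomial.X ^ ((k : ℕ) + 1) with hq
  have heval : ∀ (β) (i : Fin m) (ε : ℝ),
      (q β i).eval ε
        = ((ABR A β)⁻¹.mulVec (bRv + (ABR A β₀).mulVec (fun k => ε ^ ((k:ℕ)+1)))) i := by
    intro β i ε
    rw [hq]
    simp only [Polynomial.eval_add, Polynomial.eval_C, Polynomial.eval_finset_sum,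
      Polynomial.eval_mul, Polynomial.eval_pow, Polynomial.eval_X]
    rw [Matrix.mulVec_add]
    simp only [Pi.add_apply]
    congr 1
    rw [Matrix.mulVec_mulVec]
    simp [Matrix.mulVec, dotProduct]
  have heval0 : ∀ (β) (i : Fin m), (q β i).eval 0 = ((ABR A β)⁻¹.mulVec bRv) i := by
    intro β i
    rw [hq]
    simp [Polynomial.eval_finset_sum]
  have hqne : ∀ β, IsBasisP A β → ∀ i, q β i ≠ 0 := by
    intro β hβ i hq0
    have hrow : ∀ k, ((ABR A β)⁻¹ * (ABR A β₀)) i k = 0 := by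
      intro k
      have hcoeff := congrArg (fun p => Polynomial.coeff p ((k:ℕ)+1)) hq0
      simp only [hq, Polynomial.coeff_add, Polynomial.coeff_zero] at hcoeff
      rw [Polynomial.coeff_C, if_neg (Nat.succ_ne_zero _), Polynomial.finset_sum_coeff] at hcoeff
      rw [Finset.sum_eq_single k (fun k' _ hk' => by
          rw [Polynomial.coeff_C_mul_X_pow]
          rw [if_neg]
          intro hcontra
          apply hk'
          have hvv : (k':ℕ) = (k:ℕ) := by omega
          exact Fin.val_injective hvv) (fun hk => absurd (Finset.mem_univ k) hk)] at hcoeff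
      rw [Polynomial.coeff_C_mul_X_pow, if_pos rfl] at hcoeff
      simpa using hcoeff
    have hdetc : ((ABR A β)⁻¹ * (ABR A β₀)).det = 0 :=
      Matrix.det_eq_zero_of_row_eq_zero i hrow
    have hunit : IsUnit ((ABR A β)⁻¹ * (ABR A β₀)).det := by
      rw [Matrix.det_mul]
      exact (Matrix.isUnit_nonsing_inv_det _ hβ.2).mul hβ₀.2
    rw [hdetc] at hunit
    simpa using hunit
  by_contra hcon
  push_neg at hcon
  set Bad : Set ℝ := ⋃ (β : Fin m → Fin n), ⋃ (i : Fin m),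
      {ε | IsBasisP A β ∧ (q β i).IsRoot ε} with hBad
  have hBadfin : Bad.Finite := by
    apply Set.finite_iUnion
    intro β
    apply Set.finite_iUnion
    intro i
    by_cases hb : IsBasisP A β
    · exact (Polynomial.finite_setOf_isRoot (hqne β hb i)).subset (fun ε hε => hε.2)
    · exact Set.finite_empty.subset (fun ε hε => absurd hε.1 hb)
  have hev1 : ∀ᶠ ε in nhdsWithin 0 (Set.Ioi (0:ℝ)), ε ∉ Bad := by
    have hcl : IsClosed (Bad \ {0} : Set ℝ) := (hBadfin.subset Set.diff_subset).isClosed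
    have h0 : (0:ℝ) ∉ Bad \ {0} := fun h => h.2 rfl
    have hnb : (Bad \ {0})ᶜ ∈ nhds (0:ℝ) := hcl.isOpen_compl.mem_nhds h0
    have h1 : ∀ᶠ ε in nhdsWithin 0 (Set.Ioi (0:ℝ)), ε ∈ (Bad \ {0})ᶜ :=
      Filter.Eventually.filter_mono nhdsWithin_le_nhds hnb
    have h2 : ∀ᶠ ε in nhdsWithin 0 (Set.Ioi (0:ℝ)), ε ∈ Set.Ioi (0:ℝ) :=
      eventually_mem_nhdsWithin
    filter_upwards [h1, h2] with ε hε1 hε2 hmem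
    exact hε1 ⟨hmem, ne_of_gt hε2⟩
  have hev2 : ∀ᶠ ε in nhdsWithin 0 (Set.Ioi (0:ℝ)), ∀ (β : Fin m → Fin n) (i : Fin m),
      ((ABR A β)⁻¹.mulVec bRv) i < 0 → (q β i).eval ε < 0 := by
    rw [Filter.eventually_all]
    intro β
    rw [Filter.eventually_all]
    intro i
    by_cases hneg : ((ABR A β)⁻¹.mulVec bRv) i < 0
    · have hc : Filter.Tendsto (fun ε => (q β i).eval ε) (nhdsWithin 0 (Set.Ioi (0:ℝ)))
          (nhds ((q β i).eval 0)) :=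
        ((q β i).continuous_aeval.continuousAt).tendsto.mono_left nhdsWithin_le_nhds
      rw [heval0 β i] at hc
      have := hc.eventually_lt_const hneg
      filter_upwards [this] with ε hε _
      exact hε
    · filter_upwards with ε hcond
      exact absurd hcond hneg
  have hev3 : ∀ᶠ ε in nhdsWithin 0 (Set.Ioi (0:ℝ)), ε ∈ Set.Ioi (0:ℝ) :=
    eventually_mem_nhdsWithin
  obtain ⟨ε, hε1, hε2⟩ := (hev1.and (hev2.and hev3)).exists
  have hεpos' : (0:ℝ) < ε := hε2.2
  set bε : Fin m → ℝ := bRv + (ABR A β₀).mulVec (fun k => ε ^ ((k:ℕ)+1)) with hbε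
  have hexε : ∃ β, IsBasisP A β ∧ ∀ i, 0 ≤ ((ABR A β)⁻¹.mulVec bε) i := by
    refine ⟨β₀, hβ₀, ?_⟩
    intro i
    have h1 : (ABR A β₀)⁻¹.mulVec bε
        = (ABR A β₀)⁻¹.mulVec bRv + (fun k : Fin m => ε ^ ((k:ℕ)+1)) := by
      rw [hbε, Matrix.mulVec_add, Matrix.mulVec_mulVec,
        Matrix.nonsing_inv_mul _ hβ₀.2, Matrix.one_mulVec]
    rw [h1]
    have h2 := hβ₀feas.2.2 i
    have h3 : (0:ℝ) < ε ^ ((i:ℕ)+1) := pow_pos hεpos' _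
    simp only [Pi.add_apply]
    linarith
  have hndε : ∀ β, IsBasisP A β → ∀ i, ((ABR A β)⁻¹.mulVec bε) i ≠ 0 := by
    intro β hβ i h0
    apply hε1
    rw [hBad]
    refine Set.mem_iUnion.2 ⟨β, Set.mem_iUnion.2 ⟨i, hβ, ?_⟩⟩
    rw [Polynomial.IsRoot, heval β i ε]
    exact h0
  obtain ⟨β, ⟨⟨hβb, hβfeasε⟩, hred⟩⟩ := exists_opt_basis_nondeg A d bε hrec hexε hndε
  have hnotfeas : ¬ FeasBasis A b β := by
    intro hfb
    obtain ⟨j, hj⟩ := hcon β hfb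
    exact absurd (hred j) (not_le.2 hj)
  have hexi : ∃ i, ((ABR A β)⁻¹.mulVec bRv) i < 0 := by
    by_contra hno
    push_neg at hno
    exact hnotfeas ⟨hβb.1, hβb.2, hno⟩
  obtain ⟨i, hi⟩ := hexi
  have hlt := hε2.1 β i hi
  rw [heval β i ε] at hlt
  exact absurd (hβfeasε i) (not_le.2 hlt)

end Aux

set_option maxHeartbeats 1000000 in
/-- For a feasible IP solution `x°` and the set `ℬ` of feasible LP bases,
`val(INV(LP, x°)) ≥ min_{B ∈ ℬ} val(INV(G^B, x°)) ≥ val(INV(IP, x°))`. -/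
theorem inv_lp_ge_min_inv_gcr_ge_inv_ip (A : Matrix (Fin m) (Fin n) ℤ) (b : Fin m → ℤ)
    (hrank : A.rank = m) (c : Fin n → ℝ)
    (x₀ : Fin n → ℤ) (hx₀ : IPfeas A b x₀) :
    (⨅ β : {β : Fin m → Fin n // FeasBasis A b β}, invVal (IFR_G A b β.1 x₀) c) ≤
        invVal (IFR_LP A b x₀) c ∧
    invVal (IFR_IP A b x₀) c ≤
      ⨅ β : {β : Fin m → Fin n // FeasBasis A b β}, invVal (IFR_G A b β.1 x₀) c := by
  constructor
  · rw [invVal]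
    apply le_sInf
    rintro a ⟨d, hd, rfl⟩
    have hlp : ∃ x, LPfeas A b x :=
      ⟨fun j => (x₀ j : ℝ), cast_feas A b x₀ hx₀.1, fun i => by
        show (0:ℝ) ≤ (x₀ i : ℝ)
        exact_mod_cast hx₀.2 i⟩
    obtain ⟨β, hβ, hred⟩ := exists_optimal_feasBasis A b d (exists_basisP A hrank) hlp
      (recession A b x₀ d hx₀ hd)
    have hmem : d ∈ IFR_G A b β x₀ := mem_IFR_G_of_redCost_nonneg A b d β x₀ hβ hred hd
    have h1 : (⨅ β : {β : Fin m → Fin n // FeasBasis A b β}, invVal (IFR_G A b β.1 x₀) c)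
        ≤ invVal (IFR_G A b β x₀) c :=
          iInf_le (fun β : {β : Fin m → Fin n // FeasBasis A b β} => invVal (IFR_G A b β.1 x₀) c) ⟨β, hβ⟩
    refine h1.trans ?_
    rw [invVal]
    exact sInf_le ⟨d, hmem, rfl⟩
  · apply le_iInf
    rintro ⟨β, hβ⟩
    rw [invVal, invVal]
    apply sInf_le_sInf
    apply Set.image_mono
    intro d hd
    intro x hx
    exact hd x ⟨hx.1, fun i _ => hx.2 i⟩

end InverseGCR
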